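/- Let Ω = {(x,y,z) ∈ ℝ³ : x² ≤ y ≤ 1 − z² + x², z ∈ [0,1]}. Let f : ℝ → [0,∞) and let G : Ω → ℝ be nonnegative, satisfy the boundary condition G(u, u², ζ) = f(u) for all (u,u²,ζ) ∈ Ω, and satisfy the main inequality: G(x,y,z) ≥ Σ_{j=1}^N α_j G(x_j, y_j, z_j) whenever all points lie in Ω, α_j ∈ [0,1], Σ α_j = 1, Σ α_j x_j = x, Σ α_j y_j = y, and z_j² = z² + (x_j − x)² for each j. Fix z_0 ∈ (0,1) and let (x,y) ∈ ℝ² satisfy 0 ≤ y − x² < 1 − z_0² and y ≥ 2x². Let (x_0, y_0) = α·(x, y) with α ∈ (0,1). Then G(x_0, y_0, z_0) ≥ α · liminf_{z→z_0+} G(x, y, z) + (1 − α)·f(0). -/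

import Mathlib

open MeasureTheory Filter Topology




private lemma omega_step (f : ℝ → ℝ) (G : ℝ → ℝ → ℝ → ℝ)
    (hbdry : ∀ u ζ : ℝ, 0 ≤ ζ → ζ ≤ 1 → G u (u ^ 2) ζ = f u)
    (hmain : ∀ x y z : ℝ,
      x ^ 2 ≤ y → y ≤ 1 - z ^ 2 + x ^ 2 → 0 ≤ z → z ≤ 1 →
      ∀ (N : ℕ) (α xs ys zs : Fin N → ℝ),
        (∀ j, 0 ≤ α j) → (∀ j, α j ≤ 1) → (∑ j, α j) = 1 →
        (∑ j, α j * xs j) = x → (∑ j, α j * ys j) = y →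
        (∀ j, (xs j) ^ 2 ≤ ys j ∧ ys j ≤ 1 - (zs j) ^ 2 + (xs j) ^ 2 ∧
          0 ≤ zs j ∧ zs j ≤ 1) →
        (∀ j, (zs j) ^ 2 = z ^ 2 + (xs j - x) ^ 2) →
        (∑ j, α j * G (xs j) (ys j) (zs j)) ≤ G x y z)
    (s X Y Z X' Y' Z' ζ : ℝ)
    (hs0 : 0 ≤ s) (hs1 : s ≤ 1)
    (hX : s * X' = X) (hY : s * Y' = Y)
    (hZ' : Z' ^ 2 = Z ^ 2 + (X' - X) ^ 2)
    (hζ : ζ ^ 2 = Z ^ 2 + X ^ 2)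
    (hb1 : X ^ 2 ≤ Y) (hb2 : Y ≤ 1 - Z ^ 2 + X ^ 2) (hb3 : 0 ≤ Z) (hb4 : Z ≤ 1)
    (hp1 : X' ^ 2 ≤ Y') (hp2 : Y' ≤ 1 - Z' ^ 2 + X' ^ 2) (hp3 : 0 ≤ Z') (hp4 : Z' ≤ 1)
    (hζ0 : 0 ≤ ζ) (hζ1 : ζ ≤ 1) :
    s * G X' Y' Z' + (1 - s) * f 0 ≤ G X Y Z := by
  have hb0 : G 0 0 ζ = f 0 := by
    have := hbdry 0 ζ hζ0 hζ1
    norm_num at this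
    exact this
  have h := hmain X Y Z hb1 hb2 hb3 hb4 2 ![s, 1-s] ![X', 0] ![Y', 0] ![Z', ζ]
      (by intro j; fin_cases j <;> simp <;> linarith)
      (by intro j; fin_cases j <;> simp <;> linarith)
      (by simp [Fin.sum_univ_two])
      (by simp [Fin.sum_univ_two, hX])
      (by simp [Fin.sum_univ_two, hY])
      (by intro j; fin_cases j
          · simpa using ⟨hp1, hp2, hp3, hp4⟩
          · simp only [Matrix.cons_val_one, Matrix.head_cons, Fin.mk_one, Matrix.cons_val_zero]
            refine ⟨by norm_num, by nlinarith, hζ0, hζ1⟩)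
      (by intro j; fin_cases j <;> simp [hZ', hζ])
  calc s * G X' Y' Z' + (1 - s) * f 0
      = ∑ j, ![s, 1-s] j * G (![X', 0] j) (![Y', 0] j) (![Z', ζ] j) := by
        simp [Fin.sum_univ_two, hb0]
    _ ≤ G X Y Z := h


set_option maxHeartbeats 1000000 in

private lemma aux_chain
    (f : ℝ → ℝ) (hf0 : ∀ t, 0 ≤ f t)
    (G : ℝ → ℝ → ℝ → ℝ)
    (step : ∀ (s X Y Z X' Y' Z' ζ : ℝ),
      0 ≤ s → s ≤ 1 → s * X' = X → s * Y' = Y →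
      Z' ^ 2 = Z ^ 2 + (X' - X) ^ 2 → ζ ^ 2 = Z ^ 2 + X ^ 2 →
      X ^ 2 ≤ Y → Y ≤ 1 - Z ^ 2 + X ^ 2 → 0 ≤ Z → Z ≤ 1 →
      X' ^ 2 ≤ Y' → Y' ≤ 1 - Z' ^ 2 + X' ^ 2 → 0 ≤ Z' → Z' ≤ 1 →
      0 ≤ ζ → ζ ≤ 1 →
      s * G X' Y' Z' + (1 - s) * f 0 ≤ G X Y Z)
    (z₀ : ℝ) (hz0 : 0 < z₀) (hz1 : z₀ < 1)
    (x y : ℝ) (h1 : 0 ≤ y - x ^ 2) (h2 : y - x ^ 2 < 1 - z₀ ^ 2)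
    (h3 : 2 * x ^ 2 ≤ y) (hx2y : x ^ 2 ≤ y)
    (α : ℝ) (hα0 : 0 < α) (hα1 : α < 1)
    (n : ℕ) (hn1 : 1 ≤ n) (hnd : ((1 - α) * x) ^ 2 / n ≤ 1 - z₀ ^ 2 - (y - x ^ 2)) :
    α * G x y (Real.sqrt (z₀ ^ 2 + ((1 - α) * x) ^ 2 / n)) + (1 - α) * f 0
      ≤ G (α * x) (α * y) z₀ := by
  have hn0 : (0:ℝ) < n := by exact_mod_cast hn1
  set d : ℝ := (1 - α) * x / n with hd
  set t : ℕ → ℝ := fun k => α + k * (1 - α) / n with ht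
  set zz : ℕ → ℝ := fun k => Real.sqrt (z₀ ^ 2 + k * d ^ 2) with hzz
  have hzzsq : ∀ k : ℕ, (zz k) ^ 2 = z₀ ^ 2 + k * d ^ 2 := fun k =>
    Real.sq_sqrt (by positivity)
  have hnd2 : (n:ℝ) * d ^ 2 = ((1 - α) * x) ^ 2 / n := by
    rw [hd]; field_simp
  have hkd : ∀ k : ℕ, k ≤ n → (k:ℝ) * d ^ 2 ≤ 1 - z₀ ^ 2 - (y - x ^ 2) := by
    intro k hk
    have hkn : (k:ℝ) ≤ n := by exact_mod_cast hk
    nlinarith [sq_nonneg d]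
  have ht0 : ∀ k : ℕ, α ≤ t k := by
    intro k
    have : (0:ℝ) ≤ (k:ℝ) * (1 - α) / n :=
      div_nonneg (mul_nonneg k.cast_nonneg (by linarith)) hn0.le
    simp only [ht]; linarith
  have htpos : ∀ k : ℕ, 0 < t k := fun k => lt_of_lt_of_le hα0 (ht0 k)
  have ht1 : ∀ k : ℕ, k ≤ n → t k ≤ 1 := by
    intro k hk
    have hkn : (k:ℝ) ≤ n := by exact_mod_cast hk
    have : (k:ℝ) * (1 - α) / n ≤ 1 - α := by
      rw [div_le_iff₀ hn0]; nlinarith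
    simp only [ht]; linarith
  -- Ω membership of the chain points
  have m1 : ∀ k : ℕ, k ≤ n → (t k * x) ^ 2 ≤ t k * y := by
    intro k hk
    nlinarith [mul_nonneg (mul_nonneg (htpos k).le (sub_nonneg.2 (ht1 k hk))) (sq_nonneg x),
      mul_le_mul_of_nonneg_left hx2y (htpos k).le]
  have m2 : ∀ k : ℕ, k ≤ n → t k * y ≤ 1 - (zz k) ^ 2 + (t k * x) ^ 2 := by
    intro k hk
    rw [hzzsq]
    have e1 := hkd k hk
    nlinarith [mul_nonneg (sub_nonneg.2 (ht1 k hk))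
      (show 0 ≤ y - (1 + t k) * x ^ 2 by nlinarith [sq_nonneg x, ht1 k hk, (htpos k).le])]
  have m4 : ∀ k : ℕ, k ≤ n → zz k ≤ 1 := by
    intro k hk
    simp only [hzz]
    rw [Real.sqrt_le_one]
    linarith [hkd k hk]
  -- the auxiliary boundary ζ's
  set zeta : ℕ → ℝ := fun k => Real.sqrt (z₀ ^ 2 + k * d ^ 2 + (t k * x) ^ 2) with hzeta
  have hzetasq : ∀ k : ℕ, (zeta k) ^ 2 = z₀ ^ 2 + k * d ^ 2 + (t k * x) ^ 2 := fun k =>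
    Real.sq_sqrt (by positivity)
  have hzeta1 : ∀ k : ℕ, k ≤ n → zeta k ≤ 1 := by
    intro k hk
    simp only [hzeta]
    rw [Real.sqrt_le_one]
    have e1 := hkd k hk
    have e2 : (t k * x) ^ 2 ≤ x ^ 2 := by
      have ht2 : t k ^ 2 ≤ 1 := by nlinarith [(htpos k).le, ht1 k hk]
      calc (t k * x) ^ 2 = t k ^ 2 * x ^ 2 := by ring
        _ ≤ 1 * x ^ 2 := mul_le_mul_of_nonneg_right ht2 (sq_nonneg x)
        _ = x ^ 2 := one_mul _
    linarith
  -- the chain, by induction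
  have claim : ∀ k : ℕ, k ≤ n →
      (α / t k) * G (t k * x) (t k * y) (zz k) + (1 - α / t k) * f 0
        ≤ G (α * x) (α * y) z₀ := by
    intro k
    induction k with
    | zero =>
      intro _
      have e0 : t 0 = α := by simp [ht]
      have ez : zz 0 = z₀ := by simp [hzz, Real.sqrt_sq hz0.le]
      rw [e0, ez, div_self hα0.ne']
      simp
    | succ k ih =>
      intro hk1
      have hkn : k ≤ n := Nat.le_of_succ_le hk1
      have IH := ih hkn
      have hne := (htpos (k + 1)).ne'
      have hts : t k ≤ t (k + 1) := by
        simp only [ht]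
        push_cast
        have h1α : (0:ℝ) ≤ (1 - α) / n := div_nonneg (by linarith) hn0.le
        have e : ((k:ℝ) + 1) * (1 - α) / n = (k:ℝ) * (1 - α) / n + (1 - α) / n := by
          ring
        linarith
      have hXeq : t k / t (k + 1) * (t (k + 1) * x) = t k * x := by
        field_simp
      have hYeq : t k / t (k + 1) * (t (k + 1) * y) = t k * y := by
        field_simp
      have hdx : t (k + 1) * x - t k * x = d := by
        simp only [ht, hd]
        push_cast
        field_simp
        ring
      have S := step (t k / t (k + 1)) (t k * x) (t k * y) (zz k)
        (t (k + 1) * x) (t (k + 1) * y) (zz (k + 1)) (zeta k)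
        (div_nonneg (htpos k).le (htpos (k + 1)).le)
        (by rw [div_le_one (htpos (k + 1))]; exact hts)
        hXeq
        hYeq
        (by rw [hzzsq, hzzsq, hdx]; push_cast; ring)
        (by rw [hzetasq, hzzsq])
        (m1 k hkn) (m2 k hkn) (Real.sqrt_nonneg _) (m4 k hkn)
        (m1 (k + 1) hk1) (m2 (k + 1) hk1) (Real.sqrt_nonneg _) (m4 (k + 1) hk1)
        (Real.sqrt_nonneg _) (hzeta1 k hkn)
      have expand : α / t (k + 1) * G (t (k + 1) * x) (t (k + 1) * y) (zz (k + 1))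
            + (1 - α / t (k + 1)) * f 0
          = (α / t k) * ((t k / t (k + 1)) * G (t (k + 1) * x) (t (k + 1) * y) (zz (k + 1))
            + (1 - t k / t (k + 1)) * f 0) + (1 - α / t k) * f 0 := by
        have e1 : α / t k * (t k / t (k + 1)) = α / t (k + 1) := by
          rw [div_mul_div_comm, mul_comm (t k) (t (k + 1)),
            mul_div_mul_right _ _ (htpos k).ne']
        rw [← e1]
        ring
      rw [expand]
      have hmono := mul_le_mul_of_nonneg_left S (div_nonneg hα0.le (htpos k).le)
      linarith
  have hfin := claim n le_rfl
  have htn : t n = 1 := by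
    simp only [ht]
    field_simp
    ring
  have hzn : zz n = Real.sqrt (z₀ ^ 2 + ((1 - α) * x) ^ 2 / n) := by
    rw [hzz]
    simp only
    rw [hnd2]
  rw [htn, hzn, div_one, one_mul, one_mul] at hfin
  exact hfin

set_option maxHeartbeats 2000000 in
private lemma aux_zero
    (f : ℝ → ℝ) (hf0 : ∀ t, 0 ≤ f t)
    (G : ℝ → ℝ → ℝ → ℝ)
    (hG0 : ∀ x y z : ℝ,
      x ^ 2 ≤ y → y ≤ 1 - z ^ 2 + x ^ 2 → 0 ≤ z → z ≤ 1 → 0 ≤ G x y z)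
    (hbdry : ∀ u ζ : ℝ, 0 ≤ ζ → ζ ≤ 1 → G u (u ^ 2) ζ = f u)
    (hmain : ∀ x y z : ℝ,
      x ^ 2 ≤ y → y ≤ 1 - z ^ 2 + x ^ 2 → 0 ≤ z → z ≤ 1 →
      ∀ (N : ℕ) (α xs ys zs : Fin N → ℝ),
        (∀ j, 0 ≤ α j) → (∀ j, α j ≤ 1) → (∑ j, α j) = 1 →
        (∑ j, α j * xs j) = x → (∑ j, α j * ys j) = y →
        (∀ j, (xs j) ^ 2 ≤ ys j ∧ ys j ≤ 1 - (zs j) ^ 2 + (xs j) ^ 2 ∧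
          0 ≤ zs j ∧ zs j ≤ 1) →
        (∀ j, (zs j) ^ 2 = z ^ 2 + (xs j - x) ^ 2) →
        (∑ j, α j * G (xs j) (ys j) (zs j)) ≤ G x y z)
    (z₀ : ℝ) (hz0 : 0 < z₀) (hz1 : z₀ < 1)
    (y : ℝ) (hy0 : 0 < y) (hy1 : y < 1 - z₀ ^ 2)
    (α : ℝ) (hα0 : 0 < α) (hα1 : α < 1)
    (δ : ℝ) (hδ0 : 0 < δ) (hδ1 : δ < 1) (hδy : δ ≤ y)
    (hδε : 4 * δ ≤ 1 - z₀ ^ 2 - y) :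
    α * ((1 - Real.sqrt δ) * G 0 y (Real.sqrt (z₀ ^ 2 + 2 * δ ^ 2))) + (1 - α) * f 0
      ≤ G 0 (α * y) z₀ ∧ 0 ≤ G 0 y (Real.sqrt (z₀ ^ 2 + 2 * δ ^ 2)) := by
  set w := Real.sqrt δ with hw
  have hw2 : w ^ 2 = δ := Real.sq_sqrt hδ0.le
  have hw0 : 0 ≤ w := Real.sqrt_nonneg δ
  have hw1 : w < 1 := by nlinarith
  have hδδ : δ ^ 2 ≤ δ := by nlinarith
  have hwδ : (w - δ) ^ 2 ≤ δ := by nlinarith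
  set Z₁ := Real.sqrt (z₀ ^ 2 + δ ^ 2) with hZ₁
  set Z₂ := Real.sqrt (z₀ ^ 2 + 2 * δ ^ 2) with hZ₂
  set Z₃ := Real.sqrt (z₀ ^ 2 + δ ^ 2 + (w - δ) ^ 2) with hZ₃
  have hZ₁sq : Z₁ ^ 2 = z₀ ^ 2 + δ ^ 2 := Real.sq_sqrt (by positivity)
  have hZ₂sq : Z₂ ^ 2 = z₀ ^ 2 + 2 * δ ^ 2 := Real.sq_sqrt (by positivity)
  have hZ₃sq : Z₃ ^ 2 = z₀ ^ 2 + δ ^ 2 + (w - δ) ^ 2 := Real.sq_sqrt (by positivity)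
  have hZ₁0 : 0 ≤ Z₁ := Real.sqrt_nonneg _
  have hZ₂0 : 0 ≤ Z₂ := Real.sqrt_nonneg _
  have hZ₃0 : 0 ≤ Z₃ := Real.sqrt_nonneg _
  have hZ₁1 : Z₁ ≤ 1 := by rw [hZ₁, Real.sqrt_le_one]; nlinarith
  have hZ₂1 : Z₂ ≤ 1 := by rw [hZ₂, Real.sqrt_le_one]; nlinarith
  have hZ₃1 : Z₃ ≤ 1 := by rw [hZ₃, Real.sqrt_le_one]; nlinarith
  set γ := 1 - w with hγ
  have hγ0 : 0 < γ := by rw [hγ]; linarith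
  have hγ1 : γ ≤ 1 := by rw [hγ]; linarith
  -- Ω membership of the middle point (0, y, Z₂)
  have hQ : (0:ℝ) ^ 2 ≤ y ∧ y ≤ 1 - Z₂ ^ 2 + (0:ℝ) ^ 2 ∧ 0 ≤ Z₂ ∧ Z₂ ≤ 1 :=
    ⟨by nlinarith, by rw [hZ₂sq]; nlinarith, hZ₂0, hZ₂1⟩
  have huZ₂ : 0 ≤ G 0 y Z₂ := hG0 0 y Z₂ hQ.1 hQ.2.1 hZ₂0 hZ₂1
  -- Step B : from base (σδ, y, Z₁) towards (0, y, Z₂)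
  have stepB : ∀ σ : ℝ, σ ^ 2 = 1 → γ * G 0 y Z₂ ≤ G (σ * δ) y Z₁ := by
    intro σ hσ
    have h := hmain (σ * δ) y Z₁
      (by nlinarith) (by rw [hZ₁sq]; nlinarith) hZ₁0 hZ₁1
      2 ![γ, 1 - γ] ![0, σ * w] ![y, y] ![Z₂, Z₃]
      (by intro j; fin_cases j <;> simp <;> linarith)
      (by intro j; fin_cases j <;> simp <;> linarith)
      (by simp [Fin.sum_univ_two])
      (by simp [Fin.sum_univ_two, hγ]; linear_combination σ * hw2)
      (by simp [Fin.sum_univ_two]; ring)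
      (by intro j; fin_cases j
          · show (0:ℝ) ^ 2 ≤ y ∧ y ≤ 1 - Z₂ ^ 2 + (0:ℝ) ^ 2 ∧ 0 ≤ Z₂ ∧ Z₂ ≤ 1
            exact ⟨hQ.1, hQ.2.1, hZ₂0, hZ₂1⟩
          · show (σ * w) ^ 2 ≤ y ∧ y ≤ 1 - Z₃ ^ 2 + (σ * w) ^ 2 ∧ 0 ≤ Z₃ ∧ Z₃ ≤ 1
            refine ⟨by nlinarith [hσ, hw2], by rw [hZ₃sq]; nlinarith [hσ, hw2], hZ₃0, hZ₃1⟩)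
      (by intro j; fin_cases j
          · show Z₂ ^ 2 = Z₁ ^ 2 + ((0:ℝ) - σ * δ) ^ 2
            rw [hZ₂sq, hZ₁sq]; linear_combination (-δ ^ 2) * hσ
          · show Z₃ ^ 2 = Z₁ ^ 2 + (σ * w - σ * δ) ^ 2
            rw [hZ₃sq, hZ₁sq]; linear_combination (-(w - δ) ^ 2) * hσ)
    have hjunk : 0 ≤ G (σ * w) y Z₃ :=
      hG0 _ _ _ (by nlinarith [hσ, hw2]) (by rw [hZ₃sq]; nlinarith [hσ, hw2]) hZ₃0 hZ₃1
    have hsum : ∑ j, ![γ, 1 - γ] j * G (![0, σ * w] j) (![y, y] j) (![Z₂, Z₃] j)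
        = γ * G 0 y Z₂ + (1 - γ) * G (σ * w) y Z₃ := by
      simp [Fin.sum_univ_two]
    rw [hsum] at h
    linarith [mul_nonneg (show (0:ℝ) ≤ 1 - γ by linarith) hjunk]
  -- Step A : from base (0, αy, z₀)
  have hb0 : G 0 0 z₀ = f 0 := by
    have := hbdry 0 z₀ hz0.le hz1.le
    norm_num at this
    exact this
  have stepA : α / 2 * G δ y Z₁ + α / 2 * G (-δ) y Z₁ + (1 - α) * f 0
      ≤ G 0 (α * y) z₀ := by
    have h := hmain 0 (α * y) z₀
      (by nlinarith) (by nlinarith) hz0.le hz1.le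
      3 ![α / 2, α / 2, 1 - α] ![δ, -δ, 0] ![y, y, 0] ![Z₁, Z₁, z₀]
      (by intro j; fin_cases j <;> simp <;> linarith)
      (by intro j; fin_cases j <;> simp <;> linarith)
      (by simp [Fin.sum_univ_three])
      (by simp [Fin.sum_univ_three])
      (by simp [Fin.sum_univ_three]; ring)
      (by intro j; fin_cases j
          · show δ ^ 2 ≤ y ∧ y ≤ 1 - Z₁ ^ 2 + δ ^ 2 ∧ 0 ≤ Z₁ ∧ Z₁ ≤ 1
            refine ⟨by nlinarith, by rw [hZ₁sq]; nlinarith, hZ₁0, hZ₁1⟩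
          · show (-δ) ^ 2 ≤ y ∧ y ≤ 1 - Z₁ ^ 2 + (-δ) ^ 2 ∧ 0 ≤ Z₁ ∧ Z₁ ≤ 1
            refine ⟨by nlinarith, by rw [hZ₁sq]; nlinarith, hZ₁0, hZ₁1⟩
          · show (0:ℝ) ^ 2 ≤ 0 ∧ (0:ℝ) ≤ 1 - z₀ ^ 2 + (0:ℝ) ^ 2 ∧ 0 ≤ z₀ ∧ z₀ ≤ 1
            refine ⟨by norm_num, by nlinarith, hz0.le, hz1.le⟩)
      (by intro j; fin_cases j
          · show Z₁ ^ 2 = z₀ ^ 2 + (δ - 0) ^ 2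
            rw [hZ₁sq]; ring
          · show Z₁ ^ 2 = z₀ ^ 2 + (-δ - 0) ^ 2
            rw [hZ₁sq]; ring
          · show z₀ ^ 2 = z₀ ^ 2 + ((0:ℝ) - 0) ^ 2
            ring)
    have hsum : ∑ j, ![α / 2, α / 2, 1 - α] j
          * G (![δ, -δ, 0] j) (![y, y, 0] j) (![Z₁, Z₁, z₀] j)
        = α / 2 * G δ y Z₁ + α / 2 * G (-δ) y Z₁ + (1 - α) * G 0 0 z₀ := by
      simp [Fin.sum_univ_three]
    rw [hsum, hb0] at h
    exact h
  constructor
  · have hB1 := stepB 1 (by norm_num)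
    have hB2 := stepB (-1) (by norm_num)
    rw [one_mul] at hB1
    rw [neg_one_mul] at hB2
    rw [hw] at hγ
    nlinarith [stepA]
  · exact huZ₂

set_option maxHeartbeats 1000000 in
/-- **convexity estimate towards the origin.** For a nonnegative
function `G` on `Ω` satisfying the boundary condition and the main inequality, and a
point `(x,y)` with `0 ≤ y − x² < 1 − z₀²`, `y ≥ 2x²`, setting `(x₀,y₀) = α(x,y)` with
`α ∈ (0,1)` one has
`G(x₀,y₀,z₀) ≥ α·liminf_{z→z₀⁺} G(x,y,z) + (1 − α)·f(0)`. -/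
theorem convexity_towards_origin
    (f : ℝ → ℝ) (hf0 : ∀ t, 0 ≤ f t)
    (G : ℝ → ℝ → ℝ → ℝ)
    (hG0 : ∀ x y z : ℝ,
      x ^ 2 ≤ y → y ≤ 1 - z ^ 2 + x ^ 2 → 0 ≤ z → z ≤ 1 → 0 ≤ G x y z)
    (hbdry : ∀ u ζ : ℝ, 0 ≤ ζ → ζ ≤ 1 → G u (u ^ 2) ζ = f u)
    (hmain : ∀ x y z : ℝ,
      x ^ 2 ≤ y → y ≤ 1 - z ^ 2 + x ^ 2 → 0 ≤ z → z ≤ 1 →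
      ∀ (N : ℕ) (α xs ys zs : Fin N → ℝ),
        (∀ j, 0 ≤ α j) → (∀ j, α j ≤ 1) → (∑ j, α j) = 1 →
        (∑ j, α j * xs j) = x → (∑ j, α j * ys j) = y →
        (∀ j, (xs j) ^ 2 ≤ ys j ∧ ys j ≤ 1 - (zs j) ^ 2 + (xs j) ^ 2 ∧
          0 ≤ zs j ∧ zs j ≤ 1) →
        (∀ j, (zs j) ^ 2 = z ^ 2 + (xs j - x) ^ 2) →
        (∑ j, α j * G (xs j) (ys j) (zs j)) ≤ G x y z)
    (z₀ : ℝ) (hz₀ : 0 < z₀ ∧ z₀ < 1)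
    (x y : ℝ) (h1 : 0 ≤ y - x ^ 2) (h2 : y - x ^ 2 < 1 - z₀ ^ 2)
    (h3 : 2 * x ^ 2 ≤ y)
    (α x₀ y₀ : ℝ) (hα : 0 < α ∧ α < 1) (hx₀ : x₀ = α * x) (hy₀ : y₀ = α * y) :
    α * Filter.liminf (fun z : ℝ => G x y z) (nhdsWithin z₀ (Set.Ioi z₀)) +
      (1 - α) * f 0 ≤ G x₀ y₀ z₀ := by
  obtain ⟨hz0, hz1⟩ := hz₀
  obtain ⟨hα0, hα1⟩ := hα
  subst hx₀ hy₀
  set F := nhdsWithin z₀ (Set.Ioi z₀) with hF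
  set u : ℝ → ℝ := fun z => G x y z with hu
  set c : ℝ := (G (α * x) (α * y) z₀ - (1 - α) * f 0) / α with hc
  have hx2y : x ^ 2 ≤ y := by nlinarith [sq_nonneg x]
  -- boundedness below of u near z₀⁺
  have hbdd : IsBoundedUnder (· ≥ ·) F u := by
    have hm : z₀ < min 1 (Real.sqrt (1 - (y - x ^ 2))) := by
      refine lt_min hz1 ?_
      rw [show z₀ = Real.sqrt (z₀ ^ 2) by rw [Real.sqrt_sq hz0.le]]
      exact Real.sqrt_lt_sqrt (sq_nonneg z₀) (by linarith)
    refine ⟨0, ?_⟩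
    rw [eventually_map]
    filter_upwards [Ioo_mem_nhdsGT hm] with z hz
    obtain ⟨hz₀z, hzm⟩ := hz
    have hz01 : z ≤ 1 := le_of_lt (lt_of_lt_of_le hzm (min_le_left _ _))
    have hzs : z ^ 2 ≤ 1 - (y - x ^ 2) := by
      have : z < Real.sqrt (1 - (y - x ^ 2)) := lt_of_lt_of_le hzm (min_le_right _ _)
      nlinarith [Real.sq_sqrt (by nlinarith [sq_nonneg z₀] : (0:ℝ) ≤ 1 - (y - x ^ 2)),
        Real.sqrt_nonneg (1 - (y - x ^ 2))]
    exact hG0 x y z hx2y (by linarith) (by linarith) hz01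
  -- the key bound on the liminf
  have hlim : Filter.liminf u F ≤ c := by
    rcases eq_or_ne x 0 with hx | hx
    · -- case x = 0
      subst hx
      have hc' : c = (G 0 (α * y) z₀ - (1 - α) * f 0) / α := by rw [hc]; norm_num
      rcases eq_or_ne y 0 with hy | hy
      · -- subcase y = 0
        subst hy
        have hG00 : ∀ z : ℝ, 0 ≤ z → z ≤ 1 → G 0 0 z = f 0 := by
          intro z hz hz'
          have := hbdry 0 z hz hz'
          norm_num at this
          exact this
        have hev : ∀ᶠ z in F, u z = f 0 := by
          filter_upwards [Ioo_mem_nhdsGT hz1] with z hz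
          simpa [hu] using hG00 z (by linarith [hz.1]) hz.2.le
        have : Filter.liminf u F = f 0 := by
          rw [Filter.liminf_congr hev, Filter.liminf_const]
        rw [this, hc, le_div_iff₀ hα0]
        have hG0z : G (α * 0) (α * 0) z₀ = f 0 := by
          norm_num [hG00 z₀ hz0.le hz1.le]
        rw [hG0z]; ring_nf; nlinarith [hf0 0]
      · -- subcase y > 0
        have hy0 : 0 < y := lt_of_le_of_ne (by nlinarith) (Ne.symm hy)
        have hy1 : y < 1 - z₀ ^ 2 := by nlinarith
        have hgc : α * c = G 0 (α * y) z₀ - (1 - α) * f 0 := by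
          rw [hc']; field_simp
        -- nonnegativity of c
        have hc0 : 0 ≤ c := by
          set δ := min (1/2 : ℝ) (min y ((1 - z₀ ^ 2 - y)/4)) with hδ
          have hδ0 : 0 < δ := lt_min (by norm_num) (lt_min hy0 (by linarith))
          obtain ⟨hI, hP⟩ := aux_zero f hf0 G hG0 hbdry hmain z₀ hz0 hz1 y hy0 hy1
            α hα0 hα1 δ hδ0
            (lt_of_le_of_lt (min_le_left _ _) (by norm_num))
            (le_trans (min_le_right _ _) (min_le_left _ _))
            (by
              have hh : δ ≤ (1 - z₀ ^ 2 - y)/4 :=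
                (min_le_right _ _).trans (min_le_right _ _)
              linarith)
          have hw1 : Real.sqrt δ ≤ 1 := by
            rw [Real.sqrt_le_one]
            exact le_trans (min_le_left _ _) (by norm_num)
          have hw0 : 0 ≤ Real.sqrt δ := Real.sqrt_nonneg _
          rw [hc']
          apply div_nonneg _ hα0.le
          nlinarith [hf0 0, mul_nonneg (mul_nonneg hα0.le
            (by linarith : (0:ℝ) ≤ 1 - Real.sqrt δ)) hP]
        refine le_of_forall_gt_imp_ge_of_dense ?_
        intro c' hcc'
        set ε := c' - c with hε
        have hε0 : 0 < ε := by rw [hε]; linarith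
        have hcε : 0 < c + ε := by linarith
        have htend : Tendsto (fun δ : ℝ => Real.sqrt (z₀ ^ 2 + 2 * δ ^ 2)) (𝓝[>] 0) F := by
          have hcont : Tendsto (fun δ : ℝ => Real.sqrt (z₀ ^ 2 + 2 * δ ^ 2)) (𝓝 0) (𝓝 z₀) := by
            have hco : Continuous (fun δ : ℝ => Real.sqrt (z₀ ^ 2 + 2 * δ ^ 2)) := by
              continuity
            have h := hco.tendsto 0
            norm_num at h
            rwa [Real.sqrt_sq hz0.le] at h
          rw [hF]
          refine tendsto_nhdsWithin_of_tendsto_nhds_of_eventually_within _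
            (hcont.mono_left nhdsWithin_le_nhds) ?_
          filter_upwards [self_mem_nhdsWithin] with δ hδ
          have hδ0 : (0:ℝ) < δ := hδ
          exact Set.mem_Ioi.2 (Real.lt_sqrt_of_sq_lt (by nlinarith))
        set δ₀ := min (1/2 : ℝ) (min y (min ((1 - z₀ ^ 2 - y)/4) ((ε/(c+ε))^2))) with hδ₀
        have hδ₀0 : 0 < δ₀ := by
          refine lt_min (by norm_num) (lt_min hy0 (lt_min (by linarith) (by positivity)))
        have hev : ∀ᶠ δ in 𝓝[>] (0:ℝ), u (Real.sqrt (z₀ ^ 2 + 2 * δ ^ 2)) ≤ c' := by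
          filter_upwards [Ioo_mem_nhdsGT hδ₀0] with δ hδmem
          obtain ⟨hδ0', hδlt⟩ := hδmem
          have hδ1 : δ < 1 :=
            lt_of_lt_of_le hδlt (le_trans (min_le_left _ _) (by norm_num))
          have hδy : δ ≤ y :=
            le_of_lt (lt_of_lt_of_le hδlt (le_trans (min_le_right _ _) (min_le_left _ _)))
          have hδε : 4 * δ ≤ 1 - z₀ ^ 2 - y := by
            have := lt_of_lt_of_le hδlt
              (le_trans (min_le_right _ _) (le_trans (min_le_right _ _) (min_le_left _ _)))
            linarith
          have hδsq : δ ≤ (ε/(c+ε))^2 :=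
            le_of_lt (lt_of_lt_of_le hδlt
              (le_trans (min_le_right _ _) (le_trans (min_le_right _ _) (min_le_right _ _))))
          obtain ⟨hI, hP⟩ := aux_zero f hf0 G hG0 hbdry hmain z₀ hz0 hz1 y hy0 hy1
            α hα0 hα1 δ hδ0' hδ1 hδy hδε
          set w := Real.sqrt δ with hw
          have hw0 : 0 ≤ w := Real.sqrt_nonneg δ
          have hw1 : w < 1 := by
            nlinarith [Real.sq_sqrt hδ0'.le]
          have hwle : w ≤ ε/(c+ε) := by
            calc w ≤ Real.sqrt ((ε/(c+ε))^2) := Real.sqrt_le_sqrt hδsq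
              _ = ε/(c+ε) := Real.sqrt_sq (by positivity)
          have h2 : (c + ε) * w ≤ ε := by
            have := mul_le_mul_of_nonneg_left hwle (le_of_lt hcε)
            rwa [mul_div_cancel₀ _ hcε.ne'] at this
          have h1 : (1 - w) * G 0 y (Real.sqrt (z₀ ^ 2 + 2 * δ ^ 2)) ≤ c := by
            have := hI
            nlinarith
          show G 0 y (Real.sqrt (z₀ ^ 2 + 2 * δ ^ 2)) ≤ c'
          nlinarith [h1, h2, hP, hw1]
        exact liminf_le_of_frequently_le (htend.frequently hev.frequently) hbdd
    · -- case x ≠ 0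
      have step := omega_step f G hbdry hmain
      have hC : 0 < ((1 - α) * x) ^ 2 := by
        have : (1 - α) * x ≠ 0 := mul_ne_zero (by intro h; nlinarith [h]) hx
        positivity
      have hε₀ : 0 < 1 - z₀ ^ 2 - (y - x ^ 2) := by linarith
      have h0 : Tendsto (fun n : ℕ => ((1 - α) * x) ^ 2 / n) atTop (𝓝 0) :=
        tendsto_const_div_atTop_nhds_zero_nat _
      have h1' : Tendsto (fun n : ℕ => z₀ ^ 2 + ((1 - α) * x) ^ 2 / n) atTop (𝓝 (z₀ ^ 2)) := by
        simpa using tendsto_const_nhds.add h0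
      have h2' : Tendsto (fun n : ℕ => Real.sqrt (z₀ ^ 2 + ((1 - α) * x) ^ 2 / n))
          atTop (𝓝 z₀) := by
        have := (Real.continuous_sqrt.tendsto (z₀ ^ 2)).comp h1'
        simpa [Function.comp_def, Real.sqrt_sq hz0.le] using this
      have htend : Tendsto (fun n : ℕ => Real.sqrt (z₀ ^ 2 + ((1 - α) * x) ^ 2 / n))
          atTop F := by
        rw [hF]
        refine tendsto_nhdsWithin_of_tendsto_nhds_of_eventually_within _ h2' ?_
        filter_upwards [eventually_ge_atTop 1] with n hn
        have hn0 : (0:ℝ) < n := by exact_mod_cast hn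
        exact Set.mem_Ioi.2 (Real.lt_sqrt_of_sq_lt
          (lt_add_of_pos_right _ (div_pos hC hn0)))
      have hev : ∀ᶠ n : ℕ in atTop,
          u (Real.sqrt (z₀ ^ 2 + ((1 - α) * x) ^ 2 / n)) ≤ c := by
        filter_upwards [eventually_ge_atTop 1, h0.eventually (gt_mem_nhds hε₀)]
          with n hn1 hn2
        have hkey := aux_chain f hf0 G step z₀ hz0 hz1 x y h1 h2 h3 hx2y α hα0 hα1
          n hn1 hn2.le
        show G x y _ ≤ c
        rw [hc, le_div_iff₀ hα0]
        linarith
      exact liminf_le_of_frequently_le (htend.frequently hev.frequently) hbdd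
  -- conclude
  have hmul : α * Filter.liminf u F ≤ α * c :=
    mul_le_mul_of_nonneg_left hlim (le_of_lt hα0)
  have hcc : α * c = G (α * x) (α * y) z₀ - (1 - α) * f 0 := by
    rw [hc]; field_simp [hα0.ne']
  linarith
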